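/- Let θ* ∈ ℝ^K with θ*_k = ln(μ_k/ν_k). Define the dual network parameters p̄_{kl} = ν_l p_{lk}/ν_k and λ̄_k = ν_k (1 − Σ_{l=1}^K p_{kl}), and let P̄ = (p̄_{kl}), λ̄ = (λ̄_k). Then the gradient of H_0 at θ* satisfies −∇H_0(θ*) = λ̄ − (I − P̄^T) μ. -/

import Mathlib

open Matrix

/-- Equation (14): `−∇H₀(θ*) = λ̄ − (I − P̄ᵀ) μ`, where `θ*_k = ln(μ_k/ν_k)`,
`p̄_{kl} = ν_l p_{lk}/ν_k`, `λ̄_k = ν_k (1 − Σ_l p_{kl})`, stated componentwise: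
the `k`-th partial derivative of `H₀` at `θ*` equals `−(λ̄ − (I − P̄ᵀ) μ)_k`. -/
theorem stmt_16 {K : ℕ} (P : Matrix (Fin (K + 1)) (Fin (K + 1)) ℝ)
    (hP : ∀ k l, 0 ≤ P k l) (hProw : ∀ k, ∑ l, P k l ≤ 1)
    (hspec : ∀ z ∈ spectrum ℂ (P.map Complex.ofReal), ‖z‖ < 1)
    (lam mu : Fin (K + 1) → ℝ) (hlam : ∀ k, 0 < lam k) (hmu : ∀ k, 0 < mu k)
    (ν : Fin (K + 1) → ℝ)
    (hν : ν = ((1 : Matrix (Fin (K + 1)) (Fin (K + 1)) ℝ) - Pᵀ)⁻¹ *ᵥ lam)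
    (hνpos : ∀ k, 0 < ν k)
    (θstar : Fin (K + 1) → ℝ) (hθ : ∀ k, θstar k = Real.log (mu k / ν k))
    (Pbar : Matrix (Fin (K + 1)) (Fin (K + 1)) ℝ)
    (hPbar : ∀ k l, Pbar k l = ν l * P l k / ν k)
    (lamBar : Fin (K + 1) → ℝ)
    (hlamBar : ∀ k, lamBar k = ν k * (1 - ∑ l, P k l)) :
    ∀ k : Fin (K + 1),
      HasDerivAt
        (fun s : ℝ =>
          (∑ k', (Real.exp (Function.update θstar k s k') - 1) * lam k')
            + ∑ k', (Real.exp (-(Function.update θstar k s k'))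
                * ((∑ l, (Real.exp (Function.update θstar k s l) - 1) * P k' l) + 1) - 1) * mu k')
        (-(lamBar - (((1 : Matrix (Fin (K + 1)) (Fin (K + 1)) ℝ) - Pbarᵀ) *ᵥ mu)) k)
        (θstar k) := by
  intro k
  -- invertibility of 1 - Pᵀ
  have hdetP : ((1 : Matrix (Fin (K+1)) (Fin (K+1)) ℝ) - P).det ≠ 0 := by
    intro h0
    have h1 : (1 : ℂ) ∈ spectrum ℂ (P.map Complex.ofReal) := by
      rw [spectrum.mem_iff]
      intro hu
      rw [Matrix.isUnit_iff_isUnit_det] at hu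
      have heq : (algebraMap ℂ (Matrix (Fin (K+1)) (Fin (K+1)) ℂ) 1 - P.map Complex.ofReal)
          = ((1 : Matrix (Fin (K+1)) (Fin (K+1)) ℝ) - P).map Complex.ofReal := by
        ext i j
        simp [Matrix.algebraMap_matrix_apply, Matrix.one_apply]
        split <;> simp
      rw [heq] at hu
      have hdet : (((1 : Matrix (Fin (K+1)) (Fin (K+1)) ℝ) - P).map Complex.ofReal).det
          = Complex.ofRealHom ((1 : Matrix (Fin (K+1)) (Fin (K+1)) ℝ) - P).det :=
        (RingHom.map_det Complex.ofRealHom _).symm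
      rw [hdet, h0] at hu
      simp at hu
    have := hspec 1 h1
    simp at this
  have hTiso : ((1 : Matrix (Fin (K+1)) (Fin (K+1)) ℝ) - Pᵀ)
      = ((1 : Matrix (Fin (K+1)) (Fin (K+1)) ℝ) - P)ᵀ := by
    rw [Matrix.transpose_sub, Matrix.transpose_one]
  have hunit : IsUnit ((1 : Matrix (Fin (K+1)) (Fin (K+1)) ℝ) - Pᵀ).det := by
    rw [hTiso, Matrix.det_transpose]
    exact isUnit_iff_ne_zero.mpr hdetP
  -- lam = (1 - Pᵀ) ν componentwise
  have hlamv : ((1 : Matrix (Fin (K+1)) (Fin (K+1)) ℝ) - Pᵀ) *ᵥ ν = lam := by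
    rw [hν, Matrix.mulVec_mulVec, Matrix.mul_nonsing_inv _ hunit, Matrix.one_mulVec]
  have hlam_eq : lam k = ν k - ∑ l, P l k * ν l := by
    rw [← hlamv]
    simp [Matrix.mulVec, dotProduct, Matrix.transpose_apply, Matrix.sub_apply,
      Matrix.one_apply, sub_mul, Finset.sum_sub_distrib, Finset.sum_ite_eq]
  -- exponentials at θ*
  have hexp : ∀ j, Real.exp (θstar j) = mu j / ν j := fun j => by
    rw [hθ]; exact Real.exp_log (div_pos (hmu j) (hνpos j))
  have hexpneg : ∀ j, Real.exp (-(θstar j)) = ν j / mu j := fun j => by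
    rw [Real.exp_neg, hexp, inv_div]
  -- derivative of the inner sum
  have hinner : ∀ k' : Fin (K+1), HasDerivAt
      (fun s => ∑ l, (Real.exp (Function.update θstar k s l) - 1) * P k' l)
      (Real.exp (θstar k) * P k' k) (θstar k) := by
    intro k'
    have H := HasDerivAt.fun_sum (u := Finset.univ)
      (A := fun l s => (Real.exp (Function.update θstar k s l) - 1) * P k' l)
      (A' := fun l => if l = k then Real.exp (θstar k) * P k' k else 0) (x := θstar k) ?_
    · simpa [Finset.sum_ite_eq'] using H
    · intro l _
      by_cases h : l = k
      · rw [h]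
        simp only [Function.update_self, if_pos rfl]
        exact ((Real.hasDerivAt_exp (θstar k)).sub_const 1).mul_const (P k' k)
      · simp only [Function.update_of_ne h, if_neg h]
        exact hasDerivAt_const _ _
  -- first sum
  have hsum1 : HasDerivAt
      (fun s => ∑ k', (Real.exp (Function.update θstar k s k') - 1) * lam k')
      (Real.exp (θstar k) * lam k) (θstar k) := by
    have H := HasDerivAt.fun_sum (u := Finset.univ)
      (A := fun k' s => (Real.exp (Function.update θstar k s k') - 1) * lam k')
      (A' := fun k' => if k' = k then Real.exp (θstar k) * lam k else 0) (x := θstar k) ?_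
    · simpa [Finset.sum_ite_eq'] using H
    · intro i _
      by_cases h : i = k
      · rw [h]
        simp only [Function.update_self, if_pos rfl]
        exact ((Real.hasDerivAt_exp (θstar k)).sub_const 1).mul_const (lam k)
      · simp only [Function.update_of_ne h, if_neg h]
        exact hasDerivAt_const _ _
  -- second sum
  have hsum2 : HasDerivAt
      (fun s => ∑ k', (Real.exp (-(Function.update θstar k s k'))
          * ((∑ l, (Real.exp (Function.update θstar k s l) - 1) * P k' l) + 1) - 1) * mu k')
      (∑ k', (Real.exp (-(θstar k')) * (Real.exp (θstar k) * P k' k) * mu k'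
        + (if k' = k then
            -(Real.exp (-(θstar k))) * ((∑ l, (Real.exp (θstar l) - 1) * P k l) + 1) * mu k
          else 0)))
      (θstar k) := by
    apply HasDerivAt.fun_sum
    intro i _
    by_cases h : i = k
    · rw [h]
      simp only [Function.update_self, if_pos rfl]
      have hneg : HasDerivAt (fun s : ℝ => Real.exp (-s)) (-Real.exp (-(θstar k))) (θstar k) := by
        exact ((Real.hasDerivAt_exp (-(θstar k))).comp (θstar k) (hasDerivAt_neg (θstar k))).congr_deriv (by ring)
      have hprod := ((hneg.mul ((hinner k).add_const 1)).sub_const 1).mul_const (mu k)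
      simp only [Function.update_eq_self] at hprod
      refine hprod.congr_deriv (Eq.symm ?_)
      simp only [eq_self_iff_true, if_true]
      ring
    · simp only [Function.update_of_ne h, if_neg h]
      have hcm := ((((hinner i).add_const 1).const_mul (Real.exp (-(θstar i)))).sub_const 1).mul_const (mu i)
      refine hcm.congr_deriv (Eq.symm ?_)
      ring
  have hD := hsum1.add hsum2
  refine hD.congr_deriv (Eq.symm ?_)
  -- now the arithmetic identity
  simp only [Pi.neg_apply, Pi.sub_apply, Matrix.sub_mulVec, Matrix.one_mulVec,
    Matrix.mulVec, dotProduct, Matrix.transpose_apply]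
  rw [Finset.sum_add_distrib]
  rw [Finset.sum_ite_eq' Finset.univ k
    (fun _ => -(Real.exp (-(θstar k))) * ((∑ l, (Real.exp (θstar l) - 1) * P k l) + 1) * mu k)]
  simp only [Finset.mem_univ, if_pos, hexp, hexpneg, hlamBar]
  have hνne : ∀ j, ν j ≠ 0 := fun j => (hνpos j).ne'
  have hμne : ∀ j, mu j ≠ 0 := fun j => (hmu j).ne'
  have ha : ∑ i, ν i / mu i * (mu k / ν k * P i k) * mu i
      = (mu k / ν k) * ∑ i, P i k * ν i := by
    rw [Finset.mul_sum]
    refine Finset.sum_congr rfl fun i _ => ?_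
    have h1 := hμne i
    have h2 := hνne k
    field_simp
  have hb : -(ν k / mu k) * ((∑ l, (mu l / ν l - 1) * P k l) + 1) * mu k
      = -((∑ l, Pbar l k * mu l) - ν k * (∑ l, P k l) + ν k) := by
    have h1 : -(ν k / mu k) * ((∑ l, (mu l / ν l - 1) * P k l) + 1) * mu k
        = -(ν k * (∑ l, (mu l / ν l - 1) * P k l) + ν k) := by
      have h2 := hμne k
      field_simp
    rw [h1, Finset.mul_sum]
    have h2 : ∀ l, ν k * ((mu l / ν l - 1) * P k l) = Pbar l k * mu l - ν k * P k l := by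
      intro l
      have h3 := hνne l
      rw [hPbar]
      field_simp
    rw [Finset.sum_congr rfl fun l _ => h2 l, Finset.sum_sub_distrib, ← Finset.mul_sum]
  rw [ha, hb, hlam_eq]
  have h1 := hμne k
  have h2 := hνne k
  field_simp
  ring
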